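/- Let A be an n×n complex matrix with k = Ind(A) and rank(A^k) = t, let m be a positive integer, let B be an n×(n−t) complex matrix of full column rank with R(B) = N((A^k)^* A^{m+1} A^†), and let C be an (n−t)×n complex matrix of full row rank with N(C) = R(A^k). Then the (2n−t)×(2n−t) block matrix K = [[A, B], [C, 0]] is invertible and K⁻¹ = [[A^{w_m,†}, (I_n − A^{w_m,†} A) C^†], [B^† (I_n − A A^{w_m,†}), B^† (A A^{w_m,†} A − A) C^†]]. -/

import Mathlib

open Matrix

/-- `X` is the Moore–Penrose inverse of `A`. -/
def IsMoorePenrose {p q : ℕ} (A : Matrix (Fin p) (Fin q) ℂ)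
    (X : Matrix (Fin q) (Fin p) ℂ) : Prop :=
  A * X * A = A ∧ X * A * X = X ∧ (A * X)ᴴ = A * X ∧ (X * A)ᴴ = X * A

/-- `k` is the index of `A`: the smallest nonnegative integer `j` with
`rank (A ^ (j+1)) = rank (A ^ j)`. -/
def HasIndex {n : ℕ} (A : Matrix (Fin n) (Fin n) ℂ) (k : ℕ) : Prop :=
  (A ^ (k + 1)).rank = (A ^ k).rank ∧ ∀ j < k, (A ^ (j + 1)).rank ≠ (A ^ j).rank

/-- `X` is the core-EP inverse of `A` (with `k = Ind A`). -/
def IsCoreEP {n : ℕ} (A : Matrix (Fin n) (Fin n) ℂ) (k : ℕ)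
    (X : Matrix (Fin n) (Fin n) ℂ) : Prop :=
  X * A ^ (k + 1) = A ^ k ∧ A * X ^ 2 = X ∧ (A * X)ᴴ = A * X

/-- `X` is the Drazin inverse of `A` (with `k = Ind A`). -/
def IsDrazin {n : ℕ} (A : Matrix (Fin n) (Fin n) ℂ) (k : ℕ)
    (X : Matrix (Fin n) (Fin n) ℂ) : Prop :=
  X * A * X = X ∧ A * X = X * A ∧ X * A ^ (k + 1) = A ^ k

private lemma mv_zero {p q : ℕ} {M : Matrix (Fin p) (Fin q) ℂ}
    (h : M.mulVecLin = 0) : M = 0 := by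
  apply Matrix.toLin'.injective
  rw [Matrix.toLin'_apply', h]
  simp [Matrix.toLin'_apply', Matrix.mulVecLin_zero]

private lemma mul_eq_zero_of_range_le_ker {p q r : ℕ} {M : Matrix (Fin p) (Fin q) ℂ}
    {L : Matrix (Fin q) (Fin r) ℂ}
    (h : LinearMap.range L.mulVecLin ≤ LinearMap.ker M.mulVecLin) : M * L = 0 := by
  apply mv_zero
  rw [Matrix.mulVecLin_mul]
  exact LinearMap.range_le_ker_iff.mp h

private lemma range_le_ker_of_mul_eq_zero {p q r : ℕ} {M : Matrix (Fin p) (Fin q) ℂ}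
    {L : Matrix (Fin q) (Fin r) ℂ} (h : M * L = 0) :
    LinearMap.range L.mulVecLin ≤ LinearMap.ker M.mulVecLin :=
  LinearMap.range_le_ker_iff.mpr (by rw [← Matrix.mulVecLin_mul, h]; exact Matrix.mulVecLin_zero)

/-- The bordered matrix `K = [[A, B], [C, 0]]` is invertible, with inverse
expressed via the `m`-WGMP inverse. -/
theorem m_WGMP_inverse_bordered_matrix {n k m t : ℕ}
    (A AEP Adag : Matrix (Fin n) (Fin n) ℂ)
    (B : Matrix (Fin n) (Fin (n - t)) ℂ)
    (C : Matrix (Fin (n - t)) (Fin n) ℂ)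
    (Bdag : Matrix (Fin (n - t)) (Fin n) ℂ)
    (Cdag : Matrix (Fin n) (Fin (n - t)) ℂ)
    (hk : HasIndex A k) (hm : 0 < m)
    (ht : (A ^ k).rank = t)
    (hEP : IsCoreEP A k AEP)
    (hdag : IsMoorePenrose A Adag)
    (hBdag : IsMoorePenrose B Bdag)
    (hCdag : IsMoorePenrose C Cdag)
    (hBrank : B.rank = n - t)
    (hCrank : C.rank = n - t)
    (hB : LinearMap.range B.mulVecLin
        = LinearMap.ker ((A ^ k)ᴴ * A ^ (m + 1) * Adag).mulVecLin)
    (hC : LinearMap.ker C.mulVecLin = LinearMap.range (A ^ k).mulVecLin) :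
    IsUnit (Matrix.fromBlocks A B C 0) ∧
    (Matrix.fromBlocks A B C 0)⁻¹
      = Matrix.fromBlocks
          ((AEP ^ (m + 1) * A ^ m) * A * Adag)
          ((1 - ((AEP ^ (m + 1) * A ^ m) * A * Adag) * A) * Cdag)
          (Bdag * (1 - A * ((AEP ^ (m + 1) * A ^ m) * A * Adag)))
          (Bdag * (A * ((AEP ^ (m + 1) * A ^ m) * A * Adag) * A - A) * Cdag) := by
  obtain ⟨hk1, -⟩ := hk
  obtain ⟨hEP1, hEP2, hEP3⟩ := hEP
  set W : Matrix (Fin n) (Fin n) ℂ := AEP ^ (m + 1) * A ^ m * A * Adag with hWdef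
  set N : Matrix (Fin n) (Fin n) ℂ := (A ^ k)ᴴ * A ^ (m + 1) * Adag with hNdef
  -- (1)  A^j * AEP^(j+1) = AEP
  have e1 : ∀ j, A ^ j * AEP ^ (j + 1) = AEP := by
    intro j
    induction j with
    | zero => simp
    | succ j ih =>
      have h2 : AEP ^ (j + 1 + 1) = AEP ^ 2 * AEP ^ j := by
        rw [show j + 1 + 1 = 2 + j from by omega, pow_add]
      rw [pow_succ, h2, mul_assoc, ← mul_assoc A, hEP2, ← pow_succ']; exact ih
  -- (2)  A^(j+1) * AEP^(j+1) = A * AEP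
  have e2 : ∀ j, A ^ (j + 1) * AEP ^ (j + 1) = A * AEP := by
    intro j
    induction j with
    | zero => simp
    | succ j ih =>
      have h2 : AEP ^ (j + 1 + 1) = AEP ^ 2 * AEP ^ j := by
        rw [show j + 1 + 1 = 2 + j from by omega, pow_add]
      rw [pow_succ A (j+1), h2, mul_assoc, ← mul_assoc A, hEP2, ← pow_succ']; exact ih
  -- (3)  A * AEP * A^(k+1) = A^(k+1)
  have e3 : A * AEP * A ^ (k + 1) = A ^ (k + 1) := by
    rw [mul_assoc, hEP1, ← pow_succ']
  -- range A^k = range A^(k+1)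
  have rangeA : LinearMap.range (A ^ k).mulVecLin
      = LinearMap.range (A ^ (k + 1)).mulVecLin := by
    have hle : LinearMap.range (A ^ (k + 1)).mulVecLin
        ≤ LinearMap.range (A ^ k).mulVecLin := by
      rw [pow_succ, Matrix.mulVecLin_mul]
      exact LinearMap.range_comp_le_range _ _
    exact (Submodule.eq_of_le_of_finrank_le hle hk1.ge).symm
  -- (5)  A * AEP * A^k = A^k
  have e5 : A * AEP * A ^ k = A ^ k := by
    have hz : (A * AEP - 1) * A ^ (k + 1) = 0 := by
      rw [sub_mul, one_mul, e3, sub_self]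
    have hz2 : (A * AEP - 1) * A ^ k = 0 := by
      apply mul_eq_zero_of_range_le_ker
      rw [rangeA]
      exact range_le_ker_of_mul_eq_zero hz
    rw [sub_mul, one_mul, sub_eq_zero] at hz2
    exact hz2
  -- (6)  (A^k)ᴴ * (A * AEP) = (A^k)ᴴ
  have e6 : (A ^ k)ᴴ * (A * AEP) = (A ^ k)ᴴ := by
    conv_lhs => rw [← hEP3]
    rw [← Matrix.conjTranspose_mul, e5]
  -- generalized (right-associated) versions
  have f1 : A ^ (m + 1) * Adag * A = A ^ (m + 1) := by
    rw [pow_succ, mul_assoc (A ^ m) A Adag, mul_assoc (A ^ m), hdag.1]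
  have f1Z : ∀ Z : Matrix (Fin n) (Fin n) ℂ,
      A ^ (m + 1) * (Adag * (A * Z)) = A ^ (m + 1) * Z := by
    intro Z
    have := congrArg (· * Z) f1
    simpa only [mul_assoc] using this
  have e2Z : ∀ Z : Matrix (Fin n) (Fin n) ℂ,
      A ^ (m + 1) * (AEP ^ (m + 1) * Z) = A * (AEP * Z) := by
    intro Z
    have := congrArg (· * Z) (e2 m)
    simpa only [mul_assoc] using this
  have e6Z : ∀ Z : Matrix (Fin n) (Fin n) ℂ,
      (A ^ k)ᴴ * (A * (AEP * Z)) = (A ^ k)ᴴ * Z := by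
    intro Z
    have := congrArg (· * Z) e6
    simpa only [mul_assoc] using this
  have powZ : ∀ Z : Matrix (Fin n) (Fin n) ℂ,
      A ^ m * (A * Z) = A ^ (m + 1) * Z := by
    intro Z
    have := congrArg (· * Z) (pow_succ A m).symm
    simpa only [mul_assoc] using this
  -- (7)  N * (A * W) = N
  have e7 : N * (A * W) = N := by
    rw [hNdef, hWdef]
    simp only [mul_assoc]
    rw [f1Z, e2Z, e6Z, powZ]
  -- B-side fixing lemma
  have Bfix : ∀ M : Matrix (Fin n) (Fin n) ℂ, N * M = 0 → B * (Bdag * M) = M := by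
    intro M hM
    have hBB : (B * Bdag - 1) * B = 0 := by
      rw [Matrix.sub_mul, Matrix.one_mul, hBdag.1, sub_self]
    have hr : LinearMap.range M.mulVecLin ≤ LinearMap.ker (B * Bdag - 1).mulVecLin := by
      refine le_trans ?_ (range_le_ker_of_mul_eq_zero hBB)
      rw [hB]
      exact range_le_ker_of_mul_eq_zero hM
    have h0 : (B * Bdag - 1) * M = 0 := mul_eq_zero_of_range_le_ker hr
    rw [sub_mul, one_mul, sub_eq_zero] at h0
    rw [← Matrix.mul_assoc]; exact h0
  -- C * A^k = 0
  have CA0 : C * A ^ k = 0 := by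
    apply mul_eq_zero_of_range_le_ker
    rw [hC]
  -- C * W = 0
  have CW0 : C * W = 0 := by
    have hW : AEP ^ (m + 1) = A ^ k * AEP ^ (k + 1) * AEP ^ m := by
      rw [e1 k]; exact pow_succ' AEP m
    rw [hWdef, hW]
    simp only [mul_assoc]
    rw [← Matrix.mul_assoc C (A ^ k), CA0, Matrix.zero_mul]
  -- C * Cdag = 1
  have CCdag1 : C * Cdag = 1 := by
    have hrange : LinearMap.range C.mulVecLin = ⊤ := by
      apply Submodule.eq_top_of_finrank_eq
      rw [Module.finrank_fin_fun]
      exact hCrank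
    have hsurj : Function.Surjective C.mulVecLin := LinearMap.range_eq_top.mp hrange
    have h0 : (C * Cdag - 1) * C = 0 := by
      rw [Matrix.sub_mul, Matrix.one_mul, hCdag.1, sub_self]
    have h1 : (C * Cdag - 1).mulVecLin = 0 := by
      have h2 := congrArg Matrix.mulVecLin h0
      rw [Matrix.mulVecLin_mul, Matrix.mulVecLin_zero] at h2
      apply LinearMap.ext
      intro x
      obtain ⟨y, hy⟩ := hsurj x
      have h3 : ((C * Cdag - 1).mulVecLin ∘ₗ C.mulVecLin) y = 0 := by rw [h2]; rfl
      rw [LinearMap.comp_apply, hy] at h3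
      simpa using h3
    have := mv_zero h1
    rw [sub_eq_zero] at this
    exact this
  -- block identities
  have blk11 : A * W + B * (Bdag * (1 - A * W)) = 1 := by
    have hM : N * (1 - A * W) = 0 := by
      rw [mul_sub, mul_one, ← mul_assoc]
      rw [show N * A * W = N from by rw [mul_assoc]; exact e7, sub_self]
    rw [Bfix _ hM]
    abel
  have fix2 : B * (Bdag * (A * W * A - A)) = A * W * A - A := by
    apply Bfix
    rw [mul_sub]
    rw [show N * (A * W * A) = N * A from by
      rw [show A * W * A = A * W * A from rfl, ← mul_assoc, ← mul_assoc,
        show N * A * W = N from by rw [mul_assoc]; exact e7]]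
    rw [sub_self]
  have blk12 : A * ((1 - W * A) * Cdag) + B * (Bdag * (A * W * A - A) * Cdag) = 0 := by
    have step : B * (Bdag * (A * W * A - A) * Cdag) = (A * W * A - A) * Cdag := by
      rw [← Matrix.mul_assoc B (Bdag * (A * W * A - A)) Cdag, fix2]
    rw [step, ← Matrix.mul_assoc A (1 - W * A) Cdag, ← Matrix.add_mul]
    rw [show A * (1 - W * A) + (A * W * A - A) = 0 from by noncomm_ring, Matrix.zero_mul]
  have blk21 : C * W + (0 : Matrix (Fin (n-t)) (Fin (n-t)) ℂ) * (Bdag * (1 - A * W)) = 0 := by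
    rw [CW0, Matrix.zero_mul, add_zero]
  have blk22 : C * ((1 - W * A) * Cdag)
      + (0 : Matrix (Fin (n-t)) (Fin (n-t)) ℂ) * (Bdag * (A * W * A - A) * Cdag) = 1 := by
    have hC1 : C * (1 - W * A) = C := by
      rw [Matrix.mul_sub, Matrix.mul_one, ← Matrix.mul_assoc C W A, CW0, Matrix.zero_mul,
        sub_zero]
    rw [Matrix.zero_mul, add_zero, ← Matrix.mul_assoc C (1 - W * A) Cdag, hC1, CCdag1]
  -- assemble
  have KXeq : Matrix.fromBlocks A B C 0 *
      Matrix.fromBlocks W ((1 - W * A) * Cdag) (Bdag * (1 - A * W))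
        (Bdag * (A * W * A - A) * Cdag) = 1 := by
    rw [Matrix.fromBlocks_multiply]
    rw [blk11, blk12, blk21, blk22]
    exact Matrix.fromBlocks_one
  exact ⟨IsUnit.of_mul_eq_one _ KXeq, Matrix.inv_eq_right_inv KXeq⟩
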